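/- Let n ≥ 1 and let v₁ = [a₁,b₁], …, v_m = [a_m,b_m] ∈ F₂^{2n} be linearly independent over F₂ with ⟨vᵢ,vⱼ⟩ₛ = 0 for all i, j (so the matrices E(aᵢ,bᵢ) pairwise commute). Then the 2ⁿ×2ⁿ matrix P := ∏_{i=1}^m (1/2)(I + E(aᵢ,bᵢ)) satisfies P² = P, Pᴴ = P, and trace(P) = 2^{n−m}. (In particular, a stabilizer code on n qubits with m independent stabilizer generators has a code space of dimension 2^{n−m}, i.e., it encodes k = n − m logical qubits.) -/

import Mathlib

open scoped Matrix ComplexOrder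

/-- Pauli `X` matrix. -/
noncomputable def pauliX : Matrix (Fin 2) (Fin 2) ℂ := !![0, 1; 1, 0]

/-- Pauli `Z` matrix. -/
noncomputable def pauliZ : Matrix (Fin 2) (Fin 2) ℂ := !![1, 0; 0, -1]

/-- The single-qubit factor `i^{ab} X^a Z^b`. -/
noncomputable def pauliFactor (a b : ZMod 2) : Matrix (Fin 2) (Fin 2) ℂ :=
  (Complex.I ^ (a.val * b.val)) • (pauliX ^ a.val * pauliZ ^ b.val)

/-- `E(a,b) := ⨂_{j} i^{a_j b_j} X^{a_j} Z^{b_j}`, realized as the matrix indexed by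
`Fin n → Fin 2` whose `(x,y)` entry is the product of the corresponding entries of the
factors (the Kronecker product over the `n` factors). -/
noncomputable def EOp {n : ℕ} (a b : Fin n → ZMod 2) :
    Matrix (Fin n → Fin 2) (Fin n → Fin 2) ℂ :=
  Matrix.of fun x y => ∏ j : Fin n, pauliFactor (a j) (b j) (x j) (y j)

/-- The symplectic inner product `⟨[a,b],[a',b']⟩ₛ = a·b' + a'·b` in `F₂`. -/
def sympIP {n : ℕ} (a b a' b' : Fin n → ZMod 2) : ZMod 2 :=
  (∑ j : Fin n, a j * b' j) + (∑ j : Fin n, a' j * b j)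

lemma zmod2_cases (x : ZMod 2) : x = 0 ∨ x = 1 := by revert x; decide
lemma zmod2_valcast (x : ZMod 2) : ((x.val : ℕ) : ZMod 2) = x := by revert x; decide

noncomputable def mulPhase (a b a' b' : ZMod 2) : ℂ :=
  Complex.I ^ (a.val * b.val + a'.val * b'.val + 2 * (a'.val * b.val)
    + 3 * ((a + a').val * (b + b').val))

lemma pf00 : pauliFactor 0 0 = 1 := by simp [pauliFactor]
lemma pf10 : pauliFactor 1 0 = pauliX := by simp [pauliFactor, ZMod.val_one]
lemma pf01 : pauliFactor 0 1 = pauliZ := by simp [pauliFactor, ZMod.val_one]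
lemma pf11 : pauliFactor 1 1 = !![0, -Complex.I; Complex.I, 0] := by
  simp only [pauliFactor, ZMod.val_one, pauliX, pauliZ, pow_one, mul_one, Matrix.mul_fin_two]
  ext i j ; fin_cases i <;> fin_cases j <;> simp

lemma pauliFactor_mul (a b a' b' : ZMod 2) :
    pauliFactor a b * pauliFactor a' b' = mulPhase a b a' b' • pauliFactor (a + a') (b + b') := by
  rcases zmod2_cases a with ha | ha <;> rcases zmod2_cases b with hb | hb <;>
  rcases zmod2_cases a' with ha' | ha' <;> rcases zmod2_cases b' with hb' | hb' <;>
  subst ha hb ha' hb' <;>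
  simp only [(show ((1:ZMod 2)+1) = 0 by decide), add_zero, zero_add] <;>
  norm_num [mulPhase, (show ZMod.val (2 : ZMod 2) = 0 by decide), ZMod.val_one, pf00, pf10,
    pf01, pf11, pauliX, pauliZ, Matrix.mul_fin_two, pow_succ, Complex.I_mul_I] <;>
  · ext i j; fin_cases i <;> fin_cases j <;> simp

lemma pauliFactor_conjTranspose (a b : ZMod 2) :
    (pauliFactor a b)ᴴ = pauliFactor a b := by
  rcases zmod2_cases a with ha | ha <;> rcases zmod2_cases b with hb | hb <;> subst ha hb <;>
    simp only [pf00, pf10, pf01, pf11, pauliX, pauliZ] <;>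
    · ext i j; fin_cases i <;> fin_cases j <;> simp [Matrix.conjTranspose_apply]

lemma mulPhase_self (a b : ZMod 2) : mulPhase a b a b = 1 := by
  rcases zmod2_cases a with ha | ha <;> rcases zmod2_cases b with hb | hb <;> subst ha hb <;>
    norm_num [mulPhase, (show ((1:ZMod 2)+1) = 0 by decide),
      (show ZMod.val (2 : ZMod 2) = 0 by decide), ZMod.val_one, pow_succ, Complex.I_mul_I]

lemma mulPhase_swap (a b a' b' : ZMod 2) :
    mulPhase a b a' b' = (-1 : ℂ) ^ ((a * b' + a' * b).val) * mulPhase a' b' a b := by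
  rcases zmod2_cases a with ha | ha <;> rcases zmod2_cases b with hb | hb <;>
  rcases zmod2_cases a' with ha' | ha' <;> rcases zmod2_cases b' with hb' | hb' <;>
  subst ha hb ha' hb' <;>
  norm_num [mulPhase, (show ((1:ZMod 2)+1) = 0 by decide), add_zero, zero_add,
    (show ZMod.val (2 : ZMod 2) = 0 by decide), ZMod.val_one, pow_succ, Complex.I_mul_I,
    add_comm]

lemma EOp_zero : EOp (0 : Fin n → ZMod 2) 0 = 1 := by
  ext x y
  simp only [EOp, Matrix.of_apply, Pi.zero_apply, pf00]
  rcases eq_or_ne x y with h | h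
  · subst h; simp
  · obtain ⟨j, hj⟩ := Function.ne_iff.mp h
    rw [Finset.prod_eq_zero (Finset.mem_univ j)]
    · simp [Matrix.one_apply, h]
    · simp [Matrix.one_apply, hj]

lemma EOp_mul (a b a' b' : Fin n → ZMod 2) :
    EOp a b * EOp a' b'
      = (∏ j : Fin n, mulPhase (a j) (b j) (a' j) (b' j)) • EOp (a + a') (b + b') := by
  ext x y
  simp only [Matrix.mul_apply, EOp, Matrix.of_apply, Matrix.smul_apply, smul_eq_mul]
  calc ∑ z : Fin n → Fin 2, (∏ j, pauliFactor (a j) (b j) (x j) (z j)) *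
        ∏ j, pauliFactor (a' j) (b' j) (z j) (y j)
      = ∑ z ∈ Fintype.piFinset (fun _ : Fin n => (Finset.univ : Finset (Fin 2))),
          ∏ j, (pauliFactor (a j) (b j) (x j) (z j) * pauliFactor (a' j) (b' j) (z j) (y j)) := by
        rw [Fintype.piFinset_univ]
        exact Finset.sum_congr rfl fun z _ => (Finset.prod_mul_distrib).symm
    _ = ∏ j, ∑ k : Fin 2, pauliFactor (a j) (b j) (x j) k * pauliFactor (a' j) (b' j) k (y j) :=
        (Finset.prod_univ_sum (fun _ : Fin n => (Finset.univ : Finset (Fin 2)))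
          (fun j k => pauliFactor (a j) (b j) (x j) k * pauliFactor (a' j) (b' j) k (y j))).symm
    _ = ∏ j, (pauliFactor (a j) (b j) * pauliFactor (a' j) (b' j)) (x j) (y j) :=
        Finset.prod_congr rfl fun j _ => (Matrix.mul_apply).symm
    _ = _ := by
        simp only [pauliFactor_mul, Matrix.smul_apply, smul_eq_mul, Pi.add_apply]
        rw [Finset.prod_mul_distrib]

lemma EOp_sq (a b : Fin n → ZMod 2) : EOp a b * EOp a b = 1 := by
  rw [EOp_mul]
  have h1 : ∀ j, mulPhase (a j) (b j) (a j) (b j) = 1 := fun j => mulPhase_self _ _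
  have h2 : a + a = 0 := by funext j; simp [CharTwo.add_self_eq_zero]
  have h3 : b + b = 0 := by funext j; simp [CharTwo.add_self_eq_zero]
  simp [h1, h2, h3, EOp_zero]

lemma EOp_commute (a b a' b' : Fin n → ZMod 2) (h : sympIP a b a' b' = 0) :
    EOp a b * EOp a' b' = EOp a' b' * EOp a b := by
  rw [EOp_mul, EOp_mul]
  have hadd : a' + a = a + a' := add_comm _ _
  have hadd' : b' + b = b + b' := add_comm _ _
  rw [hadd, hadd']
  congr 1
  calc ∏ j, mulPhase (a j) (b j) (a' j) (b' j)
      = ∏ j, ((-1 : ℂ) ^ ((a j * b' j + a' j * b j).val) * mulPhase (a' j) (b' j) (a j) (b j)) :=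
        Finset.prod_congr rfl fun j _ => mulPhase_swap _ _ _ _
    _ = ((-1 : ℂ) ^ (∑ j, (a j * b' j + a' j * b j).val)) *
          ∏ j, mulPhase (a' j) (b' j) (a j) (b j) := by
        rw [Finset.prod_mul_distrib, Finset.prod_pow_eq_pow_sum]
    _ = ∏ j, mulPhase (a' j) (b' j) (a j) (b j) := by
        have hs : ((∑ j, (a j * b' j + a' j * b j).val : ℕ) : ZMod 2) = 0 := by
          push_cast [zmod2_valcast]
          rw [Finset.sum_add_distrib]
          exact h
        have : (2 : ℕ) ∣ ∑ j, (a j * b' j + a' j * b j).val :=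
          (ZMod.natCast_eq_zero_iff _ 2).mp hs
        obtain ⟨r, hr⟩ := this
        rw [Even.neg_one_pow ⟨r, by omega⟩, one_mul]

lemma EOp_conjTranspose (a b : Fin n → ZMod 2) : (EOp a b)ᴴ = EOp a b := by
  ext x y
  simp only [Matrix.conjTranspose_apply, EOp, Matrix.of_apply, star_prod]
  exact Finset.prod_congr rfl fun j _ => by
    rw [← Matrix.conjTranspose_apply, pauliFactor_conjTranspose]

lemma trace_pauliFactor (a b : ZMod 2) :
    (pauliFactor a b).trace = if a = 0 ∧ b = 0 then 2 else 0 := by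
  rcases zmod2_cases a with ha | ha <;> rcases zmod2_cases b with hb | hb <;> subst ha hb <;>
    simp [pf00, pf10, pf01, pf11, pauliX, pauliZ, Matrix.trace, Matrix.diag]

lemma trace_EOp (a b : Fin n → ZMod 2) :
    (EOp a b).trace = if a = 0 ∧ b = 0 then (2 : ℂ) ^ n else 0 := by
  have key : ∏ j : Fin n, (pauliFactor (a j) (b j)).trace = (EOp a b).trace := by
    simp only [Matrix.trace, Matrix.diag, EOp, Matrix.of_apply]
    rw [Finset.prod_univ_sum (fun _ : Fin n => (Finset.univ : Finset (Fin 2)))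
      (fun j k => pauliFactor (a j) (b j) k k), Fintype.piFinset_univ]
  rw [← key]
  simp only [trace_pauliFactor]
  rcases Classical.em (a = 0 ∧ b = 0) with ⟨ha, hb⟩ | h
  · subst ha hb; simp
  · rw [if_neg h]
    have : ∃ j : Fin n, ¬(a j = 0 ∧ b j = 0) := by
      by_contra hc
      push_neg at hc
      exact h ⟨funext fun j => (hc j).1, funext fun j => (hc j).2⟩
    obtain ⟨j, hj⟩ := this
    exact Finset.prod_eq_zero (Finset.mem_univ j) (by rw [if_neg hj])

lemma list_prod_idem {M : Type*} [Monoid M] (l : List M)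
    (h1 : ∀ x ∈ l, x * x = x) (h2 : l.Pairwise Commute) : l.prod * l.prod = l.prod := by
  induction l with
  | nil => simp
  | cons p t ih =>
    rw [List.pairwise_cons] at h2
    have hc : Commute p t.prod := Commute.list_prod_right _ _ h2.1
    have hp : p * p = p := h1 p List.mem_cons_self
    have ht : t.prod * t.prod = t.prod := ih (fun x hx => h1 x (List.mem_cons_of_mem _ hx)) h2.2
    calc (p * t.prod) * (p * t.prod) = p * (t.prod * p) * t.prod := by
          simp [mul_assoc]
      _ = p * (p * t.prod) * t.prod := by rw [← hc.eq]
      _ = (p * p) * (t.prod * t.prod) := by simp [mul_assoc]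
      _ = p * t.prod := by rw [hp, ht]

lemma trace_prod_aux {n m : ℕ} (a b : Fin m → (Fin n → ZMod 2)) :
    ∀ (L : List (Fin m)) (A B : Fin n → ZMod 2),
    (∀ S : List (Fin m), S.Sublist L →
      (A + (S.map a).sum = 0 ∧ B + (S.map b).sum = 0) → S = [] ∧ A = 0 ∧ B = 0) →
    ((L.map fun i => ((1 : ℂ) / 2) •
        ((1 : Matrix (Fin n → Fin 2) (Fin n → Fin 2) ℂ) + EOp (a i) (b i))).prod
      * EOp A B).trace
      = if A = 0 ∧ B = 0 then ((1 : ℂ) / 2) ^ L.length * 2 ^ n else 0 := by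
  intro L
  induction L with
  | nil =>
    intro A B _
    simp [trace_EOp]
  | cons i T ih =>
    intro A B h
    set Q : Fin m → Matrix (Fin n → Fin 2) (Fin n → Fin 2) ℂ :=
      fun i => ((1 : ℂ) / 2) •
        ((1 : Matrix (Fin n → Fin 2) (Fin n → Fin 2) ℂ) + EOp (a i) (b i)) with hQ
    have hstep : ((List.map Q (i :: T)).prod * EOp A B).trace
        = ((1 : ℂ) / 2) * ((List.map Q T).prod * EOp A B).trace
          + ((1 : ℂ) / 2) * (∏ j, mulPhase (A j) (B j) (a i j) (b i j))
            * ((List.map Q T).prod * EOp (A + a i) (B + b i)).trace := by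
      rw [List.map_cons, List.prod_cons, mul_assoc, Matrix.trace_mul_comm (Q i)]
      have hE : EOp A B * Q i
          = ((1 : ℂ) / 2) • EOp A B
            + (((1 : ℂ) / 2) * ∏ j, mulPhase (A j) (B j) (a i j) (b i j))
              • EOp (A + a i) (B + b i) := by
        rw [hQ]
        rw [Matrix.mul_smul, mul_add, mul_one, EOp_mul, smul_add, smul_smul]
      rw [mul_assoc, hE, mul_add, Matrix.trace_add]
      rw [Matrix.mul_smul, Matrix.mul_smul, Matrix.trace_smul, Matrix.trace_smul]
      simp [mul_assoc]
    rw [hstep]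
    have h1 := ih A B (fun S hS => h S (hS.cons i))
    have h2 : ((List.map Q T).prod * EOp (A + a i) (B + b i)).trace = 0 := by
      have := ih (A + a i) (B + b i) (fun S hS hzero => by
        exfalso
        have hsub : (i :: S).Sublist (i :: T) := hS.cons₂ i
        have := h (i :: S) hsub (by
          constructor
          · rw [List.map_cons, List.sum_cons, ← add_assoc] ; exact hzero.1
          · rw [List.map_cons, List.sum_cons, ← add_assoc] ; exact hzero.2)
        exact List.cons_ne_nil i S this.1)
      rw [this, if_neg]
      rintro ⟨h01, h02⟩
      have := h [i] (List.cons_sublist_cons.mpr (List.nil_sublist T)) (by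
        constructor
        · simpa using h01
        · simpa using h02)
      simp at this
    rw [h1, h2]
    rcases Classical.em (A = 0 ∧ B = 0) with hc | hc
    · rw [if_pos hc, if_pos hc]
      simp [List.length_cons, pow_succ]
      ring
    · rw [if_neg hc, if_neg hc]
      ring

theorem stabilizer_projector_trace (n m : ℕ) (hn : 1 ≤ n)
    (a b : Fin m → (Fin n → ZMod 2))
    (hind : LinearIndependent (ZMod 2) (fun i : Fin m => (a i, b i)))
    (hcomm : ∀ i j : Fin m, sympIP (a i) (b i) (a j) (b j) = 0) :
    let P : Matrix (Fin n → Fin 2) (Fin n → Fin 2) ℂ :=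
      (List.ofFn fun i : Fin m =>
        ((1 : ℂ) / 2) • ((1 : Matrix (Fin n → Fin 2) (Fin n → Fin 2) ℂ) + EOp (a i) (b i))).prod
    P ^ 2 = P ∧ Pᴴ = P ∧ P.trace = (2 : ℂ) ^ ((n : ℤ) - (m : ℤ)) := by
  intro P
  set Q : Fin m → Matrix (Fin n → Fin 2) (Fin n → Fin 2) ℂ :=
    fun i => ((1 : ℂ) / 2) •
      ((1 : Matrix (Fin n → Fin 2) (Fin n → Fin 2) ℂ) + EOp (a i) (b i)) with hQ
  have hPdef : P = (List.ofFn Q).prod := rfl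
  -- commuting factors
  have hQcomm : ∀ i j : Fin m, Commute (Q i) (Q j) := by
    intro i j
    have hE : EOp (a i) (b i) * EOp (a j) (b j) = EOp (a j) (b j) * EOp (a i) (b i) :=
      EOp_commute _ _ _ _ (hcomm i j)
    show Q i * Q j = Q j * Q i
    rw [hQ]
    simp only [Matrix.smul_mul, Matrix.mul_smul, add_mul, mul_add, one_mul, mul_one, hE,
      smul_smul]
    module
  have hpw : (List.ofFn Q).Pairwise Commute :=
    List.pairwise_ofFn.mpr fun i j _ => hQcomm i j
  -- idempotent factors
  have hQidem : ∀ i, Q i * Q i = Q i := by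
    intro i
    unfold Q
    rw [Matrix.smul_mul, Matrix.mul_smul, smul_smul]
    rw [add_mul, mul_add, mul_add, one_mul, mul_one, one_mul, EOp_sq]
    have : (1 : Matrix (Fin n → Fin 2) (Fin n → Fin 2) ℂ) + EOp (a i) (b i)
        + (EOp (a i) (b i) + 1) = (2 : ℂ) • (1 + EOp (a i) (b i)) := by
      rw [two_smul]; abel
    rw [this, smul_smul]
    norm_num
  refine ⟨?_, ?_, ?_⟩
  · rw [sq, hPdef]
    exact list_prod_idem _ (by
      intro x hx
      obtain ⟨i, rfl⟩ := List.mem_ofFn.mp hx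
      exact hQidem i) hpw
  · rw [hPdef, Matrix.conjTranspose_list_prod]
    have hmap : List.map Matrix.conjTranspose (List.ofFn Q) = List.ofFn Q := by
      rw [List.map_ofFn]
      congr 1
      funext i
      show (Q i)ᴴ = Q i
      unfold Q
      rw [Matrix.conjTranspose_smul, Matrix.conjTranspose_add, Matrix.conjTranspose_one,
        EOp_conjTranspose]
      norm_num
    rw [hmap]
    exact List.Perm.prod_eq' (List.reverse_perm _) ((List.pairwise_reverse).mpr
      (hpw.imp fun h => h.symm))
  · have hofn : List.ofFn Q = (List.finRange m).map Q := by
      rw [List.ofFn_eq_map]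
    have hmain := trace_prod_aux a b (List.finRange m) 0 0 (by
      intro S hS hzero
      refine ⟨?_, rfl, rfl⟩
      have hnodup : S.Nodup := (List.nodup_finRange m).sublist hS
      have hsa : (S.map a).sum = 0 := by simpa using hzero.1
      have hsb : (S.map b).sum = 0 := by simpa using hzero.2
      -- linear independence
      classical
      set g : Fin m → ZMod 2 := fun i => if i ∈ S then 1 else 0 with hg
      have hsum : ∑ i : Fin m, g i • ((a i, b i) : (Fin n → ZMod 2) × (Fin n → ZMod 2)) = 0 := by
        have step1 : ∑ i : Fin m, g i • ((a i, b i) : (Fin n → ZMod 2) × (Fin n → ZMod 2))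
            = ∑ i ∈ S.toFinset, ((a i, b i) : (Fin n → ZMod 2) × (Fin n → ZMod 2)) := by
          rw [show (∑ i : Fin m, g i • ((a i, b i) : (Fin n → ZMod 2) × (Fin n → ZMod 2)))
              = ∑ i : Fin m, if i ∈ S.toFinset
                  then ((a i, b i) : (Fin n → ZMod 2) × (Fin n → ZMod 2)) else 0 from
            Finset.sum_congr rfl fun i _ => by
              by_cases hi : i ∈ S <;> simp [hg, hi, List.mem_toFinset]]
          rw [Finset.sum_ite_mem, Finset.univ_inter]
        have step2 : ∑ i ∈ S.toFinset, ((a i, b i) : (Fin n → ZMod 2) × (Fin n → ZMod 2))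
            = (((S.map a).sum), ((S.map b).sum)) := by
          refine Prod.ext ?_ ?_
          · rw [Prod.fst_sum]; exact List.sum_toFinset a hnodup
          · rw [Prod.snd_sum]; exact List.sum_toFinset b hnodup
        rw [step1, step2, hsa, hsb]
        rfl
      have hg0 := Fintype.linearIndependent_iff.mp hind g hsum
      rw [List.eq_nil_iff_forall_not_mem]
      intro i hi
      have := hg0 i
      rw [hg] at this
      simp [hi] at this
      )
    have hP1 : P.trace = ((List.map Q (List.finRange m)).prod * EOp (0 : Fin n → ZMod 2) 0).trace := by
      rw [hPdef, hofn, EOp_zero, mul_one]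
    rw [hP1, hmain]
    simp only [List.length_finRange, if_pos (And.intro rfl rfl), and_self, ↓reduceIte]
    rw [zpow_sub₀ (two_ne_zero), zpow_natCast, zpow_natCast]
    field_simp
    rw [← mul_pow]; norm_num
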